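/- Let D_1, …, D_m be linearly ordered sets, X = D_1 × ⋯ × D_m, and let R be the family of all subsets of X of the form {x ∈ X : x_i ≤ a} or {x ∈ X : x_i ≥ a} for some coordinate i and a ∈ D_i. For b ≥ 1, let R_b be the family of all subsets of X obtainable as combinations of unions and intersections of b (not necessarily distinct) members of R. Then the VC-dimension of the range space (X, R_b) is at most 3·(m+1)·b·log₂((m+1)·b); that is, every finite subset of X shattered by R_b has cardinality at most 3·(m+1)·b·log₂((m+1)·b). -/

import Mathlib

/-- A set `A` is shattered by the range family `R` if every subset of `A`
is obtained as the intersection of `A` with some range. -/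
def Shatters {X : Type*} (R : Set (Set X)) (A : Set X) : Prop :=
  ∀ B ⊆ A, ∃ r ∈ R, A ∩ r = B

/-- A formal combination of sets using binary unions and intersections. -/
inductive SetCombo (X : Type u) : Type u
  | leaf : Set X → SetCombo X
  | union : SetCombo X → SetCombo X → SetCombo X
  | inter : SetCombo X → SetCombo X → SetCombo X

namespace SetCombo

/-- The set denoted by a combination. -/
def eval {X : Type u} : SetCombo X → Set X
  | leaf s => s
  | union c₁ c₂ => c₁.eval ∪ c₂.eval
  | inter c₁ c₂ => c₁.eval ∩ c₂.eval

/-- The number of leaves (members of the base family used, with multiplicity). -/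
def size {X : Type u} : SetCombo X → ℕ
  | leaf _ => 1
  | union c₁ c₂ => c₁.size + c₂.size
  | inter c₁ c₂ => c₁.size + c₂.size

/-- All leaves belong to the family `R`. -/
def leavesIn {X : Type u} (R : Set (Set X)) : SetCombo X → Prop
  | leaf s => s ∈ R
  | union c₁ c₂ => c₁.leavesIn R ∧ c₂.leavesIn R
  | inter c₁ c₂ => c₁.leavesIn R ∧ c₂.leavesIn R

end SetCombo

/-- The family of all sets obtainable as combinations of unions and intersections of
`h` (not necessarily distinct) members of `R`. -/
def combos {X : Type u} (R : Set (Set X)) (h : ℕ) : Set (Set X) :=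
  {s | ∃ c : SetCombo X, c.size = h ∧ c.leavesIn R ∧ c.eval = s}

/-- The ranges on `X = D₁ × ⋯ × D_m` given by single-clause selection queries
`{x : x_i ≤ a}` or `{x : x_i ≥ a}`. -/
def selectRanges {m : ℕ} (D : Fin m → Type*) [∀ i, LinearOrder (D i)] :
    Set (Set (∀ i, D i)) :=
  {s | ∃ (i : Fin m) (a : D i), s = {x | x i ≤ a} ∨ s = {x | a ≤ x i}}

namespace VCaux
open Classical SetCombo
noncomputable section
variable {X : Type u}

def tr (A : Finset X) (s : Set X) : Finset X := A.filter (· ∈ s)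

lemma coe_tr (A : Finset X) (s : Set X) : (tr A s : Set X) = (A : Set X) ∩ s := by
  ext x; simp [tr, Set.mem_inter_iff]

lemma tr_union (A : Finset X) (s t : Set X) : tr A (s ∪ t) = tr A s ∪ tr A t := by
  ext x; simp [tr]; tauto

lemma tr_inter (A : Finset X) (s t : Set X) : tr A (s ∩ t) = tr A s ∩ tr A t := by
  ext x; simp [tr]; tauto

lemma tr_subset (A : Finset X) (s : Set X) : tr A s ⊆ A := Finset.filter_subset _ _

def shape : SetCombo X → List Bool
  | .leaf _ => [true]
  | .union c₁ c₂ => false :: (shape c₁ ++ shape c₂)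
  | .inter c₁ c₂ => false :: (shape c₁ ++ shape c₂)

def ops : SetCombo X → List Bool
  | .leaf _ => []
  | .union c₁ c₂ => true :: (ops c₁ ++ ops c₂)
  | .inter c₁ c₂ => false :: (ops c₁ ++ ops c₂)

def leaves : SetCombo X → List (Set X)
  | .leaf s => [s]
  | .union c₁ c₂ => leaves c₁ ++ leaves c₂
  | .inter c₁ c₂ => leaves c₁ ++ leaves c₂

lemma one_le_size (c : SetCombo X) : 1 ≤ c.size := by
  induction c with
  | leaf s => simp [SetCombo.size]
  | union c₁ c₂ h₁ h₂ => simp [SetCombo.size]; omega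
  | inter c₁ c₂ h₁ h₂ => simp [SetCombo.size]; omega

lemma shape_length (c : SetCombo X) : (shape c).length = 2 * c.size - 1 := by
  induction c with
  | leaf s => simp [shape, SetCombo.size]
  | union c₁ c₂ h₁ h₂ =>
      have := one_le_size c₁; have := one_le_size c₂
      simp [shape, SetCombo.size, h₁, h₂]; omega
  | inter c₁ c₂ h₁ h₂ =>
      have := one_le_size c₁; have := one_le_size c₂
      simp [shape, SetCombo.size, h₁, h₂]; omega

lemma ops_length (c : SetCombo X) : (ops c).length = c.size - 1 := by
  induction c with
  | leaf s => simp [ops, SetCombo.size]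
  | union c₁ c₂ h₁ h₂ =>
      have := one_le_size c₁; have := one_le_size c₂
      simp [ops, SetCombo.size, h₁, h₂]; omega
  | inter c₁ c₂ h₁ h₂ =>
      have := one_le_size c₁; have := one_le_size c₂
      simp [ops, SetCombo.size, h₁, h₂]; omega

lemma leaves_length (c : SetCombo X) : (leaves c).length = c.size := by
  induction c with
  | leaf s => simp [leaves, SetCombo.size]
  | union c₁ c₂ h₁ h₂ => simp [leaves, SetCombo.size, h₁, h₂]
  | inter c₁ c₂ h₁ h₂ => simp [leaves, SetCombo.size, h₁, h₂]

lemma leaves_mem {R : Set (Set X)} {c : SetCombo X} (hc : c.leavesIn R) :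
    ∀ s ∈ leaves c, s ∈ R := by
  induction c with
  | leaf t => intro s hs; simp [leaves] at hs; subst hs; exact hc
  | union c₁ c₂ h₁ h₂ =>
      intro s hs; simp [leaves] at hs
      rcases hs with h | h
      · exact h₁ hc.1 s h
      · exact h₂ hc.2 s h
  | inter c₁ c₂ h₁ h₂ =>
      intro s hs; simp [leaves] at hs
      rcases hs with h | h
      · exact h₁ hc.1 s h
      · exact h₂ hc.2 s h

lemma enc_det (A : Finset X) :
    ∀ (c₁ : SetCombo X) (c₂ : SetCombo X) (p p' q q' : List Bool)
      (r r' : List (Finset X)),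
      shape c₁ ++ p = shape c₂ ++ p' →
      ops c₁ ++ q = ops c₂ ++ q' →
      (leaves c₁).map (tr A) ++ r = (leaves c₂).map (tr A) ++ r' →
      tr A c₁.eval = tr A c₂.eval ∧ p = p' ∧ q = q' ∧ r = r' := by
  intro c₁
  induction c₁ with
  | leaf s =>
      intro c₂ p p' q q' r r' hs ho hl
      cases c₂ with
      | leaf s' =>
          simp [shape, ops, leaves] at hs ho hl
          refine ⟨?_, hs, ho, hl.2⟩
          simp [SetCombo.eval, hl.1]
      | union d₁ d₂ => simp [shape] at hs
      | inter d₁ d₂ => simp [shape] at hs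
  | union a₁ a₂ ih₁ ih₂ =>
      intro c₂ p p' q q' r r' hs ho hl
      cases c₂ with
      | leaf s' => simp [shape] at hs
      | union d₁ d₂ =>
          simp only [shape, ops, leaves, List.cons_append, List.cons.injEq,
            List.append_assoc, List.map_append] at hs ho hl
          obtain ⟨h₁, hp₁, hq₁, hr₁⟩ := ih₁ d₁ _ _ _ _ _ _ hs.2 ho.2 hl
          obtain ⟨h₂, hp₂, hq₂, hr₂⟩ := ih₂ d₂ _ _ _ _ _ _ hp₁ hq₁ hr₁
          exact ⟨by simp [SetCombo.eval, tr_union, h₁, h₂], hp₂, hq₂, hr₂⟩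
      | inter d₁ d₂ => simp [ops] at ho
  | inter a₁ a₂ ih₁ ih₂ =>
      intro c₂ p p' q q' r r' hs ho hl
      cases c₂ with
      | leaf s' => simp [shape] at hs
      | union d₁ d₂ => simp [ops] at ho
      | inter d₁ d₂ =>
          simp only [shape, ops, leaves, List.cons_append, List.cons.injEq,
            List.append_assoc, List.map_append] at hs ho hl
          obtain ⟨h₁, hp₁, hq₁, hr₁⟩ := ih₁ d₁ _ _ _ _ _ _ hs.2 ho.2 hl
          obtain ⟨h₂, hp₂, hq₂, hr₂⟩ := ih₂ d₂ _ _ _ _ _ _ hp₁ hq₁ hr₁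
          exact ⟨by simp [SetCombo.eval, tr_inter, h₁, h₂], hp₂, hq₂, hr₂⟩

lemma list_eq_of_getD {α : Type*} (d : α) (l₁ l₂ : List α) (h₁ : l₁.length = l₂.length)
    (h : ∀ i, i < l₁.length → l₁.getD i d = l₂.getD i d) : l₁ = l₂ := by
  apply List.ext_getElem h₁
  intro i hi₁ hi₂
  have := h i hi₁
  rwa [List.getD_eq_getElem l₁ d hi₁, List.getD_eq_getElem l₂ d hi₂] at this

/-- The trace family of `R` on `A`. -/
def traces (A : Finset X) (R : Set (Set X)) : Finset (Finset X) :=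
  A.powerset.filter (fun B => ∃ s ∈ R, tr A s = B)

/-- Main counting lemma. -/
lemma count_le (A : Finset X) (R : Set (Set X)) (b : ℕ) (hb : 1 ≤ b)
    (hA : Shatters (combos R b) (A : Set X)) :
    2 ^ A.card ≤ 2 ^ (2 * b - 1) * (2 ^ (b - 1) * (traces A R).card ^ b) := by
  classical
  set T := traces A R with hT
  -- the realizability predicate
  set P : Finset X → Prop :=
    fun B => ∃ c : SetCombo X, c.size = b ∧ c.leavesIn R ∧ tr A c.eval = B with hP
  have hPall : ∀ B ∈ A.powerset, P B := by
    intro B hB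
    rw [Finset.mem_powerset] at hB
    obtain ⟨r, hr, hAr⟩ := hA (B : Set X) (by exact_mod_cast hB)
    obtain ⟨c, hsize, hleaves, hev⟩ := hr
    exact ⟨c, hsize, hleaves, by
      apply Finset.coe_injective
      rw [coe_tr, hev, hAr]⟩
  -- injection
  set f : Finset X → (Fin (2 * b - 1) → Bool) × (Fin (b - 1) → Bool) × (Fin b → Finset X) :=
    fun B =>
      if h : P B then
        (fun i => (shape h.choose).getD i true,
         fun i => (ops h.choose).getD i true,
         fun i => ((leaves h.choose).map (tr A)).getD i ∅)
      else default with hf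
  set target : Finset ((Fin (2 * b - 1) → Bool) × (Fin (b - 1) → Bool) × (Fin b → Finset X)) :=
    Finset.univ ×ˢ Finset.univ ×ˢ Fintype.piFinset (fun _ : Fin b => T) with htarget
  have hcard : A.powerset.card ≤ target.card := by
    apply Finset.card_le_card_of_injOn f
    · intro B hB
      have hPB := hPall B hB
      obtain ⟨hsize, hleaves, htr⟩ := hPB.choose_spec
      simp only [hf, dif_pos hPB, htarget, Finset.mem_coe, Finset.mem_product, Finset.mem_univ, true_and,
        Fintype.mem_piFinset]
      intro i
      have hlen : ((leaves hPB.choose).map (tr A)).length = b := by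
        rw [List.length_map, leaves_length, hsize]
      have hi : (i : ℕ) < ((leaves hPB.choose).map (tr A)).length := by
        rw [hlen]; exact i.isLt
      rw [List.getD_eq_getElem _ _ hi]
      simp only [List.getElem_map]
      set s := (leaves hPB.choose)[(i:ℕ)]'(by simpa using hi) with hs
      have hsR : s ∈ R := leaves_mem hleaves s (List.getElem_mem _)
      rw [hT]
      simp only [traces, Finset.mem_filter, Finset.mem_powerset]
      exact ⟨tr_subset _ _, s, hsR, rfl⟩
    · intro B₁ hB₁ B₂ hB₂ hfeq
      have h₁ := hPall B₁ (by simpa using hB₁)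
      have h₂ := hPall B₂ (by simpa using hB₂)
      obtain ⟨hsz₁, hlv₁, htr₁⟩ := h₁.choose_spec
      obtain ⟨hsz₂, hlv₂, htr₂⟩ := h₂.choose_spec
      rw [hf] at hfeq
      simp only [dif_pos h₁, dif_pos h₂, Prod.mk.injEq] at hfeq
      obtain ⟨e₁, e₂, e₃⟩ := hfeq
      have hs : shape h₁.choose = shape h₂.choose := by
        apply list_eq_of_getD true
        · rw [shape_length, shape_length, hsz₁, hsz₂]
        · intro i hi
          have hi' : i < 2 * b - 1 := by rwa [shape_length, hsz₁] at hi
          exact congrFun e₁ ⟨i, hi'⟩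
      have ho : ops h₁.choose = ops h₂.choose := by
        apply list_eq_of_getD true
        · rw [ops_length, ops_length, hsz₁, hsz₂]
        · intro i hi
          have hi' : i < b - 1 := by rwa [ops_length, hsz₁] at hi
          exact congrFun e₂ ⟨i, hi'⟩
      have hl : (leaves h₁.choose).map (tr A) = (leaves h₂.choose).map (tr A) := by
        apply list_eq_of_getD ∅
        · rw [List.length_map, List.length_map, leaves_length, leaves_length, hsz₁, hsz₂]
        · intro i hi
          have hi' : i < b := by rwa [List.length_map, leaves_length, hsz₁] at hi
          exact congrFun e₃ ⟨i, hi'⟩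
      have := enc_det A h₁.choose h₂.choose [] [] [] [] [] []
        (by simpa using hs) (by simpa using ho) (by simpa using hl)
      rw [← htr₁, ← htr₂, this.1]
  rw [Finset.card_powerset] at hcard
  calc 2 ^ A.card ≤ _ := hcard
    _ = 2 ^ (2 * b - 1) * (2 ^ (b - 1) * T.card ^ b) := by
        rw [htarget, Finset.card_product, Finset.card_product, Fintype.card_piFinset]
        simp [Finset.card_univ]


lemma tr_mono {X : Type u} (A : Finset X) {s t : Set X} (h : s ⊆ t) : tr A s ⊆ tr A t := by
  intro x hx
  simp only [tr, Finset.mem_filter] at hx ⊢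
  exact ⟨hx.1, h hx.2⟩

lemma tr_subset2 {X : Type u} (A : Finset X) (s : Set X) : tr A s ⊆ A := Finset.filter_subset _ _

lemma chain_card {X : Type u} (A : Finset X) {ι : Type v} (f : ι → Set X)
    (hf : ∀ a a' : ι, f a ⊆ f a' ∨ f a' ⊆ f a) :
    (A.powerset.filter (fun B => ∃ a, tr A (f a) = B)).card ≤ A.card + 1 := by
  classical
  rw [← Finset.card_range (A.card + 1)]
  apply Finset.card_le_card_of_injOn (fun B => B.card)
  · intro B hB
    simp only [Finset.mem_coe, Finset.mem_filter, Finset.mem_powerset] at hB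
    simp only [Finset.mem_coe, Finset.mem_range]
    exact Nat.lt_succ_of_le (Finset.card_le_card hB.1)
  · intro B₁ hB₁ B₂ hB₂ hcard
    simp only [Finset.coe_filter, Set.mem_setOf_eq, Finset.mem_powerset] at hB₁ hB₂
    obtain ⟨hB₁A, a₁, ha₁⟩ := hB₁
    obtain ⟨hB₂A, a₂, ha₂⟩ := hB₂
    rcases hf a₁ a₂ with h | h
    · exact Finset.eq_of_subset_of_card_le (ha₁ ▸ ha₂ ▸ tr_mono A h) hcard.ge
    · exact (Finset.eq_of_subset_of_card_le (ha₂ ▸ ha₁ ▸ tr_mono A h) hcard.le).symm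

variable {m : ℕ} {D : Fin m → Type*} [∀ i, LinearOrder (D i)]

/-- parametrized family of single-clause ranges -/
def fam (D : Fin m → Type*) [∀ i, LinearOrder (D i)] (p : Fin m × Bool) (a : D p.1) :
    Set (∀ i, D i) :=
  if p.2 then {x | x p.1 ≤ a} else {x | a ≤ x p.1}

lemma fam_chain (p : Fin m × Bool) (a a' : D p.1) : fam D p a ⊆ fam D p a' ∨ fam D p a' ⊆ fam D p a := by
  rcases le_total a a' with h | h
  · rcases p with ⟨i, _ | _⟩
    · right; intro x hx; simp only [fam, if_neg Bool.false_ne_true] at hx ⊢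
      exact le_trans h hx
    · left; intro x hx; simp only [fam, if_pos rfl] at hx ⊢
      exact le_trans hx h
  · rcases p with ⟨i, _ | _⟩
    · left; intro x hx; simp only [fam, if_neg Bool.false_ne_true] at hx ⊢
      exact le_trans h hx
    · right; intro x hx; simp only [fam, if_pos rfl] at hx ⊢
      exact le_trans hx h

lemma traces_select_card (A : Finset (∀ i, D i)) :
    (traces A (selectRanges D)).card ≤ 2 * m * (A.card + 1) := by
  classical
  have hsub : traces A (selectRanges D) ⊆
      (Finset.univ : Finset (Fin m × Bool)).biUnion (fun p =>
        A.powerset.filter (fun B => ∃ a : D p.1, tr A (fam D p a) = B)) := by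
    intro B hB
    simp only [traces, Finset.mem_filter, Finset.mem_powerset] at hB
    obtain ⟨hBA, s, hs, htr⟩ := hB
    obtain ⟨i, a, hcase⟩ := hs
    rw [Finset.mem_biUnion]
    rcases hcase with h | h
    · exact ⟨(i, true), Finset.mem_univ _, by
        simp only [Finset.mem_filter, Finset.mem_powerset]
        exact ⟨hBA, a, by rw [← htr, h]; rfl⟩⟩
    · exact ⟨(i, false), Finset.mem_univ _, by
        simp only [Finset.mem_filter, Finset.mem_powerset]
        exact ⟨hBA, a, by rw [← htr, h]; rfl⟩⟩
  calc (traces A (selectRanges D)).card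
      ≤ _ := Finset.card_le_card hsub
    _ ≤ ∑ p : Fin m × Bool, (A.powerset.filter
          (fun B => ∃ a : D p.1, tr A (fam D p a) = B)).card := Finset.card_biUnion_le
    _ ≤ ∑ _p : Fin m × Bool, (A.card + 1) := by
        apply Finset.sum_le_sum
        intro p _
        exact chain_card A (fam D p) (fam_chain p)
    _ = 2 * m * (A.card + 1) := by
        simp [Finset.sum_const, Finset.card_univ]
        ring


set_option maxHeartbeats 2000000 in
lemma analytic_step (n m b : ℕ) (hm : 1 ≤ m) (hb : 1 ≤ b)
    (h : (n:ℝ) ≤ 3*(b:ℝ) - 2 + (b:ℝ) * Real.logb 2 (2*(m:ℝ)*((n:ℝ)+1))) :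
    (n:ℝ) ≤ 3 * ((m:ℝ)+1) * (b:ℝ) * Real.logb 2 (((m:ℝ)+1)*(b:ℝ)) := by
  have h2 : (1:ℝ) < 2 := one_lt_two
  set M : ℝ := (m:ℝ) + 1 with hMdef
  set B : ℝ := (b:ℝ) with hBdef
  have hm1 : (1:ℝ) ≤ (m:ℝ) := by exact_mod_cast hm
  have hM2 : (2:ℝ) ≤ M := by rw [hMdef]; linarith
  have hB1 : (1:ℝ) ≤ B := by rw [hBdef]; exact_mod_cast hb
  have hMpos : (0:ℝ) < M := by linarith
  have hBpos : (0:ℝ) < B := by linarith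
  have hmpos : (0:ℝ) < (m:ℝ) := by linarith
  set u : ℝ := Real.logb 2 M with hudef
  set v : ℝ := Real.logb 2 B with hvdef
  have hlogb2 : Real.logb 2 2 = 1 := Real.logb_self_eq_one h2
  have hu1 : 1 ≤ u := by
    rw [hudef, ← hlogb2]
    exact Real.logb_le_logb_of_le h2 (by norm_num) hM2
  have hv0 : 0 ≤ v := Real.logb_nonneg h2 hB1
  have hsplitMB : Real.logb 2 (M*B) = u + v :=
    Real.logb_mul (ne_of_gt hMpos) (ne_of_gt hBpos)
  set s : ℝ := u + v with hsdef
  have hs1 : 1 ≤ s := by rw [hsdef]; linarith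
  have hspos : 0 < s := by linarith
  set t : ℝ := 3 * M * B * s with htdef
  clear_value M B u v s t
  have hMB2 : 2*B ≤ M*B := by nlinarith [mul_nonneg (by linarith : (0:ℝ) ≤ M - 2) hBpos.le]
  have hMBs1 : M*B ≤ M*B*s := by
    nlinarith [mul_nonneg (mul_pos hMpos hBpos).le (by linarith : (0:ℝ) ≤ s - 1)]
  have ht6B : 6 * B ≤ t := by rw [htdef]; nlinarith
  have ht6 : (6:ℝ) ≤ t := by nlinarith
  have htpos : 0 < t := by linarith
  rw [hsplitMB, ← htdef]
  by_contra hcon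
  push_neg at hcon
  -- hcon : t < n
  have hlog2 : (0.6931471803:ℝ) < Real.log 2 := Real.log_two_gt_d9
  have hlog2pos : 0 < Real.log 2 := by linarith
  have hlogm : Real.logb 2 (m:ℝ) ≤ u := by
    rw [hudef]
    exact Real.logb_le_logb_of_le h2 hmpos (by rw [hMdef]; linarith)
  have hlogs : Real.logb 2 s ≤ 1.45 * (s - 1) := by
    have h1 : Real.log s ≤ s - 1 := Real.log_le_sub_one_of_pos hspos
    have h2' : Real.logb 2 s = Real.log s / Real.log 2 := rfl
    rw [h2', div_le_iff₀ hlog2pos]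
    nlinarith [mul_nonneg (by linarith : (0:ℝ) ≤ s - 1)
      (by linarith : (0:ℝ) ≤ 1.45 * Real.log 2 - 1)]
  -- Step B : key inequality at t
  have hkey : 3*B - 2 + B * Real.logb 2 (2*(m:ℝ)*(t+1)) ≤ t := by
    have harg : 2*(m:ℝ)*(t+1) ≤ 7*(m:ℝ)*M*B*s := by
      have h7 : 7*(m:ℝ)*M*B*s = (7/3)*(m:ℝ)*t := by rw [htdef]; ring
      rw [h7]
      nlinarith [mul_nonneg hmpos.le (by linarith : (0:ℝ) ≤ t - 6)]
    have hpos1 : (0:ℝ) < 2*(m:ℝ)*(t+1) := by positivity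
    have hlog : Real.logb 2 (2*(m:ℝ)*(t+1)) ≤ Real.logb 2 (7*(m:ℝ)*M*B*s) :=
      Real.logb_le_logb_of_le h2 hpos1 harg
    have hsplit : Real.logb 2 (7*(m:ℝ)*M*B*s) =
        Real.logb 2 7 + Real.logb 2 (m:ℝ) + u + v + Real.logb 2 s := by
      rw [Real.logb_mul (by positivity) (ne_of_gt hspos),
          Real.logb_mul (by positivity) (ne_of_gt hBpos),
          Real.logb_mul (by positivity) (ne_of_gt hMpos),
          Real.logb_mul (by norm_num) (ne_of_gt hmpos), hudef, hvdef]
    have h7le : Real.logb 2 (7:ℝ) ≤ 3 := by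
      have h8 : Real.logb 2 ((8:ℝ)) = 3 := by
        rw [show (8:ℝ) = 2^(3:ℕ) by norm_num, Real.logb_pow, hlogb2]; norm_num
      calc Real.logb 2 (7:ℝ) ≤ Real.logb 2 8 :=
            Real.logb_le_logb_of_le h2 (by norm_num) (by norm_num)
        _ = 3 := h8
    have hchain : B * Real.logb 2 (2*(m:ℝ)*(t+1)) ≤
        B * (3 + u + u + v + 1.45*(s-1)) := by
      apply mul_le_mul_of_nonneg_left _ (le_of_lt hBpos)
      calc Real.logb 2 (2*(m:ℝ)*(t+1)) ≤ Real.logb 2 (7*(m:ℝ)*M*B*s) := hlog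
        _ = Real.logb 2 7 + Real.logb 2 (m:ℝ) + u + v + Real.logb 2 s := hsplit
        _ ≤ 3 + u + u + v + 1.45*(s-1) := by linarith
    rcases eq_or_lt_of_le hb with hb1 | hb2
    · have hB1' : B = 1 := by rw [hBdef, ← hb1]; norm_num
      have hv0' : v = 0 := by rw [hvdef, hB1', Real.logb_one]
      have hMu : 2*u ≤ M*u := by
        nlinarith [mul_nonneg (by linarith : (0:ℝ) ≤ M - 2) (by linarith : (0:ℝ) ≤ u)]
      have htu : t = 3*(M*u) := by rw [htdef, hsdef, hv0', hB1']; ring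
      rw [hB1'] at hchain ⊢
      linarith [hchain, hMu, htu]
    · have hb2' : (2:ℕ) ≤ b := hb2
      have hB2 : (2:ℝ) ≤ B := by rw [hBdef]; exact_mod_cast hb2'
      have hv1 : 1 ≤ v := by
        rw [hvdef, ← hlogb2]
        exact Real.logb_le_logb_of_le h2 (by norm_num) hB2
      have hBu : B ≤ B*u := by
        nlinarith [mul_nonneg hBpos.le (by linarith : (0:ℝ) ≤ u - 1)]
      have hBv : B ≤ B*v := by
        nlinarith [mul_nonneg hBpos.le (by linarith : (0:ℝ) ≤ v - 1)]
      have hMBu : 2*(B*u) ≤ M*(B*u) := by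
        nlinarith [mul_nonneg (by linarith : (0:ℝ) ≤ M - 2)
          (mul_nonneg hBpos.le (by linarith : (0:ℝ) ≤ u))]
      have hMBv : 2*(B*v) ≤ M*(B*v) := by
        nlinarith [mul_nonneg (by linarith : (0:ℝ) ≤ M - 2)
          (mul_nonneg hBpos.le (by linarith : (0:ℝ) ≤ v))]
      have htuv : t = 3*(M*(B*u)) + 3*(M*(B*v)) := by rw [htdef, hsdef]; ring
      have hBs : B*s = B*u + B*v := by rw [hsdef]; ring
      linarith [hchain, hBu, hBv, hMBu, hMBv, htuv, hBpos, hBs]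
  -- Step A : near-monotonicity
  have htp : (0:ℝ) < t + 1 := by linarith
  have hnpos : (0:ℝ) < (n:ℝ) + 1 := by positivity
  have hstepA : Real.logb 2 (2*(m:ℝ)*((n:ℝ)+1)) ≤
      Real.logb 2 (2*(m:ℝ)*(t+1)) + ((n:ℝ)-t)/((t+1)*Real.log 2) := by
    have hdiff : Real.logb 2 (2*(m:ℝ)*((n:ℝ)+1)) - Real.logb 2 (2*(m:ℝ)*(t+1)) =
        Real.logb 2 (((n:ℝ)+1)/(t+1)) := by
      rw [← Real.logb_div (by positivity) (by positivity)]
      congr 1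
      field_simp
    have hratio : Real.log (((n:ℝ)+1)/(t+1)) ≤ ((n:ℝ)-t)/(t+1) := by
      have h1 := Real.log_le_sub_one_of_pos (show (0:ℝ) < ((n:ℝ)+1)/(t+1) by positivity)
      have heq : ((n:ℝ)+1)/(t+1) - 1 = ((n:ℝ)-t)/(t+1) := by field_simp; ring
      linarith [heq ▸ h1]
    have hlb : Real.logb 2 (((n:ℝ)+1)/(t+1)) ≤ ((n:ℝ)-t)/((t+1)*Real.log 2) := by
      rw [Real.logb, div_le_div_iff₀ hlog2pos (by positivity)]
      calc Real.log (((n:ℝ)+1)/(t+1)) * ((t+1)*Real.log 2)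
          = (Real.log (((n:ℝ)+1)/(t+1)) * (t+1)) * Real.log 2 := by ring
        _ ≤ (((n:ℝ)-t)) * Real.log 2 := by
            apply mul_le_mul_of_nonneg_right _ hlog2pos.le
            have h3 := mul_le_mul_of_nonneg_right hratio (le_of_lt htp)
            rwa [div_mul_cancel₀ _ (ne_of_gt htp)] at h3
    linarith [hdiff, hlb]
  -- finish
  have hden : B < (t+1)*Real.log 2 := by
    have h1 : 6*B*Real.log 2 ≤ (t+1)*Real.log 2 :=
      mul_le_mul_of_nonneg_right (by linarith) hlog2pos.le
    have h2' : B < 6*B*Real.log 2 := by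
      nlinarith [mul_pos hBpos (by linarith : (0:ℝ) < 6*Real.log 2 - 1)]
    linarith
  have hnt : 0 < (n:ℝ) - t := by linarith
  have hfrac : B * (((n:ℝ)-t)/((t+1)*Real.log 2)) < (n:ℝ) - t := by
    rw [mul_div_assoc', div_lt_iff₀ (by positivity)]
    nlinarith [mul_pos hnt (by linarith : (0:ℝ) < (t+1)*Real.log 2 - B)]
  have hmain : (n:ℝ) ≤ 3*B - 2 + B * (Real.logb 2 (2*(m:ℝ)*(t+1)) + ((n:ℝ)-t)/((t+1)*Real.log 2)) := by
    calc (n:ℝ) ≤ 3*B - 2 + B * Real.logb 2 (2*(m:ℝ)*((n:ℝ)+1)) := h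
      _ ≤ _ := by
          have := mul_le_mul_of_nonneg_left hstepA (le_of_lt hBpos)
          linarith
  rw [mul_add] at hmain
  linarith

end
end VCaux

namespace VCaux
noncomputable section
variable {X : Type u}

lemma exists_leaf {R : Set (Set X)} : ∀ c : SetCombo X, c.leavesIn R → ∃ s, s ∈ R := by
  intro c
  induction c with
  | leaf t => intro h; exact ⟨t, h⟩
  | union c₁ c₂ h₁ h₂ => intro h; exact h₁ h.1
  | inter c₁ c₂ h₁ h₂ => intro h; exact h₁ h.1

end
end VCaux


set_option maxHeartbeats 1000000 in
/-- The range space of selection queries whose predicate is a Boolean combination of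
`b` single-clause conditions on a table with `m` linearly ordered columns has
VC-dimension at most `3 (m+1) b log₂((m+1) b)`. -/
theorem vcdim_selectRanges_boolean {m : ℕ} (D : Fin m → Type*) [∀ i, LinearOrder (D i)]
    (b : ℕ) (hb : 1 ≤ b) :
    ∀ A : Finset (∀ i, D i), Shatters (combos (selectRanges D) b) (A : Set (∀ i, D i)) →
      (A.card : ℝ) ≤ 3 * (m + 1) * b * Real.logb 2 ((m + 1) * b) := by
  intro A hA
  rcases Nat.eq_zero_or_pos m with hm0 | hm
  · -- no ranges at all : shattering is impossible
    exfalso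
    obtain ⟨r, hr, -⟩ := hA ∅ (Set.empty_subset _)
    obtain ⟨c, -, hleaves, -⟩ := hr
    obtain ⟨s, hs⟩ := VCaux.exists_leaf c hleaves
    obtain ⟨i, -, -⟩ := hs
    have := i.isLt
    omega
  · set n := A.card with hn
    -- combinatorial bound
    have hcount := VCaux.count_le A (selectRanges D) b hb hA
    have htr := VCaux.traces_select_card A
    have hnat : 2 ^ n ≤ 2 ^ (2*b-1) * (2 ^ (b-1) * (2*m*(n+1)) ^ b) := by
      refine hcount.trans ?_
      have := Nat.pow_le_pow_left htr b
      exact Nat.mul_le_mul_left _ (Nat.mul_le_mul_left _ this)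
    -- pass to the reals and take logarithms
    have hL1 : 1 ≤ 2*m*(n+1) :=
      Nat.mul_pos (Nat.mul_pos (by norm_num) hm) (Nat.succ_pos n)
    have hreal : ((2:ℝ))^n ≤ (2:ℝ)^(2*b-1) * ((2:ℝ)^(b-1) * ((2*m*(n+1) : ℕ):ℝ) ^ b) := by
      exact_mod_cast hnat
    have hlogb2 : Real.logb 2 2 = 1 := Real.logb_self_eq_one one_lt_two
    have hlog := Real.logb_le_logb_of_le one_lt_two (by positivity) hreal
    have hLpos : (0:ℝ) < ((2*m*(n+1) : ℕ):ℝ) := by exact_mod_cast hL1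
    rw [Real.logb_pow] at hlog
    rw [Real.logb_mul (by positivity) (by positivity),
        Real.logb_mul (by positivity) (by positivity),
        Real.logb_pow, Real.logb_pow, hlogb2] at hlog
    have hcasts : ((2*b-1 : ℕ):ℝ) = 2*(b:ℝ) - 1 := by
      have : 1 ≤ 2*b := by omega
      push_cast [Nat.cast_sub this]
      ring
    have hcast2 : ((b-1 : ℕ):ℝ) = (b:ℝ) - 1 := by
      push_cast [Nat.cast_sub hb]
      ring
    have hargcast : ((2*m*(n+1) : ℕ):ℝ) = 2*(m:ℝ)*((n:ℝ)+1) := by push_cast; ring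
    have hbridge : (n:ℝ) ≤ 3*(b:ℝ) - 2 + (b:ℝ) * Real.logb 2 (2*(m:ℝ)*((n:ℝ)+1)) := by
      simp only [mul_one] at hlog
      rw [hcasts, hcast2, hargcast, Real.logb_pow] at hlog
      linarith
    have hfinal := VCaux.analytic_step n m b hm hb hbridge
    push_cast at hfinal ⊢
    exact hfinal
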